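/- arXiv:2510.16748 — 4 statements merged into one kernel-verified Lean document; each statement's English description precedes it below -/
import Mathlib

section
/- Let n ≥ 2 and let Γ ⊂ ℝⁿ be an open convex cone satisfying Γ + Γₙ ⊂ Γ, where Γₙ = {λ ∈ ℝⁿ : λᵢ > 0 for all i}. Let f : Γ → ℝ be continuously differentiable and concave on Γ, with all partial derivatives fᵢ(λ) = ∂f/∂λᵢ strictly positive on Γ. Suppose there is a constant c > 0 such that f(λ + τ) − f(λ) ≥ c·(τ₁·τ₂·⋯·τₙ)^{1/n} for all λ ∈ Γ and all τ ∈ Γₙ. Then for every λ ∈ Γ one has ∏_{i=1}^{n} fᵢ(λ) ≥ (c/n)ⁿ. -/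
/-- Gradient inequality for concave functions along a segment. -/
lemma grad_ineq {n : ℕ} {Γ : Set (Fin n → ℝ)} {f : (Fin n → ℝ) → ℝ}
    {L : (Fin n → ℝ) →L[ℝ] ℝ} {x y : Fin n → ℝ}
    (hconc : ConcaveOn ℝ Γ f) (hx : x ∈ Γ) (hy : y ∈ Γ)
    (hL : HasFDerivAt f L x) : f y - f x ≤ L (y - x) := by
  have hline : HasDerivAt (fun t : ℝ => x + t • (y - x)) (y - x) 0 := by
    simpa using ((hasDerivAt_id (0:ℝ)).smul_const (y - x)).const_add x
  have hL0 : HasFDerivAt f L (x + (0:ℝ) • (y - x)) := by simpa using hL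
  have hg : HasDerivAt (fun t : ℝ => f (x + t • (y - x))) (L (y - x)) 0 := by
    exact hL0.comp_hasDerivAt (0:ℝ) hline
  have hslope : Filter.Tendsto (slope (fun t : ℝ => f (x + t • (y - x))) 0)
      (nhdsWithin 0 (Set.Ioi 0)) (nhds (L (y - x))) := by
    exact (hasDerivAt_iff_tendsto_slope.mp hg).mono_left
      (nhdsWithin_mono 0 (fun t ht => ne_of_gt ht))
  refine ge_of_tendsto hslope ?_
  filter_upwards [Ioo_mem_nhdsGT_of_mem (Set.mem_Ico.mpr ⟨le_refl (0:ℝ), one_pos⟩)]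
    with t ht
  obtain ⟨ht0, ht1⟩ := ht
  have hcc : f (x + t • (y - x)) ≥ (1 - t) * f x + t * f y := by
    have := hconc.2 hx hy (by linarith : (0:ℝ) ≤ 1 - t) (le_of_lt ht0) (by ring)
    calc f (x + t • (y - x)) = f ((1 - t) • x + t • y) := by
          congr 1; simp [smul_sub]; module
      _ ≥ (1 - t) • f x + t • f y := this
      _ = (1 - t) * f x + t * f y := by simp [smul_eq_mul]
  rw [slope_def_field]
  have h0 : x + (0:ℝ) • (y - x) = x := by simp
  rw [h0, sub_zero, le_div_iff₀ ht0]
  nlinarith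

/-- **Lemma 2.5 (forward direction).** If `f : Γ → ℝ` is a `C¹`, concave function on an
open convex cone `Γ ⊆ ℝⁿ` with `Γ + Γₙ ⊆ Γ`, all of whose partial derivatives are
strictly positive, and `f (λ + τ) - f λ ≥ c (τ₁ ⋯ τₙ)^(1/n)` for all `λ ∈ Γ`, `τ ∈ Γₙ`,
then `∏ᵢ fᵢ(λ) ≥ (c/n)ⁿ` on `Γ`. -/
theorem stmt_0 (n : ℕ) (hn : 2 ≤ n) (Γ : Set (Fin n → ℝ))
    (hΓopen : IsOpen Γ)
    (hΓconvex : Convex ℝ Γ)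
    (hΓcone : ∀ t : ℝ, 0 < t → ∀ x ∈ Γ, t • x ∈ Γ)
    (hΓadd : ∀ x ∈ Γ, ∀ τ : Fin n → ℝ, (∀ i, 0 < τ i) → x + τ ∈ Γ)
    (f : (Fin n → ℝ) → ℝ) (f' : (Fin n → ℝ) → ((Fin n → ℝ) →L[ℝ] ℝ))
    (hf' : ∀ x ∈ Γ, HasFDerivAt f (f' x) x)
    (hf'cont : ContinuousOn f' Γ)
    (hconc : ConcaveOn ℝ Γ f)
    (hpos : ∀ x ∈ Γ, ∀ i, 0 < f' x (Pi.single i 1))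
    (c : ℝ) (hc : 0 < c)
    (hineq : ∀ x ∈ Γ, ∀ τ : Fin n → ℝ, (∀ i, 0 < τ i) →
      f (x + τ) - f x ≥ c * (∏ i, τ i) ^ ((1 : ℝ) / n)) :
    ∀ x ∈ Γ, (∏ i, f' x (Pi.single i 1)) ≥ (c / n) ^ n := by
  intro x hx
  set a : Fin n → ℝ := fun i => f' x (Pi.single i 1) with ha
  have hai : ∀ i, 0 < a i := hpos x hx
  set τ : Fin n → ℝ := fun i => (a i)⁻¹ with hτ
  have hτpos : ∀ i, 0 < τ i := fun i => inv_pos.mpr (hai i)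
  have hyΓ : x + τ ∈ Γ := hΓadd x hx τ hτpos
  have hdecomp : τ = ∑ i, τ i • (Pi.single i 1 : Fin n → ℝ) := by
    ext j
    rw [Finset.sum_apply]
    simp [Pi.single_apply, smul_eq_mul]
  have happ : f' x τ = (n : ℝ) := by
    conv_lhs => rw [hdecomp]
    rw [map_sum]
    simp only [map_smul, smul_eq_mul]
    have h1 : ∀ i ∈ Finset.univ, (a i)⁻¹ * (f' x) (Pi.single i 1) = 1 :=
      fun i _ => inv_mul_cancel₀ (hai i).ne'
    rw [Finset.sum_congr rfl h1]
    simp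
  have hgi : f (x + τ) - f x ≤ (n : ℝ) := by
    have := grad_ineq hconc hx hyΓ (hf' x hx)
    simpa [happ] using this
  have hlow := hineq x hx τ hτpos
  set P : ℝ := ∏ i, a i with hP
  have hPpos : 0 < P := Finset.prod_pos fun i _ => hai i
  have hprodτ : (∏ i, τ i) = P⁻¹ := by
    rw [hP, ← Finset.prod_inv_distrib]
  have hkey : c * (P⁻¹) ^ ((1:ℝ)/n) ≤ (n : ℝ) := by
    calc c * (P⁻¹) ^ ((1:ℝ)/n) = c * (∏ i, τ i) ^ ((1:ℝ)/n) := by rw [hprodτ]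
      _ ≤ f (x + τ) - f x := hlow
      _ ≤ (n : ℝ) := hgi
  set Q : ℝ := P ^ ((1:ℝ)/n) with hQ
  have hQpos : 0 < Q := Real.rpow_pos_of_pos hPpos _
  have hinv : (P⁻¹) ^ ((1:ℝ)/n) = Q⁻¹ := by
    rw [hQ, ← Real.inv_rpow hPpos.le]
  have hn0 : (n : ℝ) ≠ 0 := by positivity
  have hcQ : c / n ≤ Q := by
    rw [hinv] at hkey
    rw [div_le_iff₀ (by positivity : (0:ℝ) < n)]
    nlinarith [mul_le_mul_of_nonneg_left hkey hQpos.le, mul_inv_cancel₀ hQpos.ne', hQpos]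
  have hQn : Q ^ n = P := by
    rw [hQ, ← Real.rpow_natCast (P ^ ((1:ℝ)/n)) n, ← Real.rpow_mul hPpos.le]
    rw [one_div, inv_mul_cancel₀ hn0, Real.rpow_one]
  calc P = Q ^ n := hQn.symm
    _ ≥ (c / n) ^ n := pow_le_pow_left₀ (by positivity) hcQ n
end

section
/- Let n ≥ 2 and let Γ ⊂ ℝⁿ be an open convex cone satisfying Γ + Γₙ ⊂ Γ, where Γₙ = {λ ∈ ℝⁿ : λᵢ > 0 for all i}. Let f : Γ → ℝ be continuously differentiable with all partial derivatives fᵢ(λ) = ∂f/∂λᵢ strictly positive on Γ, and suppose there is a constant c' > 0 such that ∏_{i=1}^{n} fᵢ(λ) ≥ c' for all λ ∈ Γ. Then for all λ ∈ Γ and all τ ∈ Γₙ one has f(λ + τ) − f(λ) ≥ (c')^{1/n} · (τ₁·τ₂·⋯·τₙ)^{1/n}. -/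
/-- **Lemma 2.5 (converse direction).** If `f : Γ → ℝ` is `C¹` on an open convex cone
`Γ ⊆ ℝⁿ` with `Γ + Γₙ ⊆ Γ`, all of whose partial derivatives are strictly positive, and
`∏ᵢ fᵢ(λ) ≥ c'` on `Γ`, then `f (λ + τ) - f λ ≥ (c')^(1/n) (τ₁ ⋯ τₙ)^(1/n)` for all
`λ ∈ Γ` and `τ ∈ Γₙ`. -/
theorem stmt_1 (n : ℕ) (hn : 2 ≤ n) (Γ : Set (Fin n → ℝ))
    (hΓopen : IsOpen Γ)
    (hΓconvex : Convex ℝ Γ)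
    (hΓcone : ∀ t : ℝ, 0 < t → ∀ x ∈ Γ, t • x ∈ Γ)
    (hΓadd : ∀ x ∈ Γ, ∀ τ : Fin n → ℝ, (∀ i, 0 < τ i) → x + τ ∈ Γ)
    (f : (Fin n → ℝ) → ℝ) (f' : (Fin n → ℝ) → ((Fin n → ℝ) →L[ℝ] ℝ))
    (hf' : ∀ x ∈ Γ, HasFDerivAt f (f' x) x)
    (hf'cont : ContinuousOn f' Γ)
    (hpos : ∀ x ∈ Γ, ∀ i, 0 < f' x (Pi.single i 1))
    (c' : ℝ) (hc' : 0 < c')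
    (hlow : ∀ x ∈ Γ, (∏ i, f' x (Pi.single i 1)) ≥ c') :
    ∀ x ∈ Γ, ∀ τ : Fin n → ℝ, (∀ i, 0 < τ i) →
      f (x + τ) - f x ≥ c' ^ ((1 : ℝ) / n) * (∏ i, τ i) ^ ((1 : ℝ) / n) := by
  intro x hx τ hτ
  have hn0 : (n : ℝ) ≠ 0 := by positivity
  set g : ℝ → ℝ := fun t => f (x + t • τ) with hgdef
  have hmem : ∀ t : ℝ, 0 ≤ t → x + t • τ ∈ Γ := by
    intro t ht
    rcases eq_or_lt_of_le ht with h | h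
    · simpa [← h] using hx
    · exact hΓadd x hx (t • τ) (fun i => by have := hτ i; simp [Pi.smul_apply]; positivity)
  have hderiv : ∀ t : ℝ, 0 ≤ t → HasDerivAt g (f' (x + t • τ) τ) t := by
    intro t ht
    have hγ : HasDerivAt (fun s : ℝ => x + s • τ) τ t := by
      simpa using ((hasDerivAt_id t).smul_const τ).const_add x
    exact (hf' _ (hmem t ht)).comp_hasDerivAt t hγ
  obtain ⟨θ, hθ, heq⟩ := exists_hasDerivAt_eq_slope g (fun t => f' (x + t • τ) τ)
    one_pos (fun t ht => (hderiv t ht.1).continuousAt.continuousWithinAt)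
    (fun t ht => hderiv t (le_of_lt ht.1))
  set ξ := x + θ • τ with hξdef
  have hξ : ξ ∈ Γ := hmem θ hθ.1.le
  have hgdiff : f (x + τ) - f x = f' ξ τ := by
    have : g 1 = f (x + τ) := by simp [hgdef]
    have h0 : g 0 = f x := by simp [hgdef]
    rw [heq, this, h0]; ring
  have hsingle : ∀ i, (Pi.single i (τ i) : Fin n → ℝ) = τ i • (Pi.single i 1 : Fin n → ℝ) := by
    intro i; ext j
    by_cases h : j = i <;> simp [Pi.single_apply, h]
  have hlin : f' ξ τ = ∑ i, f' ξ (Pi.single i 1) * τ i := by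
    conv_lhs => rw [← Finset.univ_sum_single τ]
    rw [map_sum]
    refine Finset.sum_congr rfl fun i _ => ?_
    rw [hsingle i, map_smul, smul_eq_mul, mul_comm]
  set a : Fin n → ℝ := fun i => f' ξ (Pi.single i 1) * τ i with hadef
  have hapos : ∀ i, 0 < a i := fun i => mul_pos (hpos ξ hξ i) (hτ i)
  -- AM-GM
  have hsumw : ∑ _i : Fin n, (n : ℝ)⁻¹ = 1 := by
    simp [Finset.sum_const, hn0]
  have hamgm : (∏ i, a i) ^ ((1:ℝ)/n) ≤ ∑ i, a i := by
    have h1 : ∏ i, (a i) ^ ((n:ℝ)⁻¹) ≤ ∑ i : Fin n, (n:ℝ)⁻¹ * a i :=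
      Real.geom_mean_le_arith_mean_weighted Finset.univ (fun _ => (n:ℝ)⁻¹) a
        (fun i _ => by positivity) hsumw (fun i _ => (hapos i).le)
    have h2 : ∏ i, (a i) ^ ((n:ℝ)⁻¹) = (∏ i, a i) ^ ((1:ℝ)/n) := by
      rw [Real.finset_prod_rpow _ _ (fun i _ => (hapos i).le), one_div]
    have h3 : ∑ i : Fin n, (n:ℝ)⁻¹ * a i ≤ ∑ i, a i := by
      refine Finset.sum_le_sum fun i _ => ?_
      have : (n:ℝ)⁻¹ ≤ 1 := by
        rw [inv_le_one_iff₀]; right; exact_mod_cast Nat.one_le_of_lt hn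
      nlinarith [(hapos i).le]
    rw [← h2]; exact le_trans h1 h3
  have hprod : (∏ i, a i) = (∏ i, f' ξ (Pi.single i 1)) * ∏ i, τ i := by
    rw [← Finset.prod_mul_distrib]
  have hτprodpos : 0 < ∏ i, τ i := Finset.prod_pos (fun i _ => hτ i)
  have hfin : c' ^ ((1:ℝ)/n) * (∏ i, τ i) ^ ((1:ℝ)/n) ≤ (∏ i, a i) ^ ((1:ℝ)/n) := by
    rw [hprod, Real.mul_rpow (le_of_lt (lt_of_lt_of_le hc' (hlow ξ hξ))) hτprodpos.le]
    gcongr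
    exact hlow ξ hξ

  rw [ge_iff_le, hgdiff, hlin]
  exact le_trans hfin hamgm
end

section
/- Let n ≥ 2 and let Γ ⊂ ℝⁿ be an open convex cone, invariant under permutations of the coordinates, with Γₙ ⊂ Γ ⊂ Γ₁, where Γₙ = {λ ∈ ℝⁿ : λᵢ > 0 for all i} and Γ₁ = {λ ∈ ℝⁿ : λ₁ + ⋯ + λₙ > 0}. Let f : Γ → ℝ be continuously differentiable, concave, symmetric (invariant under permutations of the variables), positively homogeneous of degree one (f(tλ) = t·f(λ) for all t > 0 and λ ∈ Γ), with strictly positive partial derivatives and normalized so that f(1,1,…,1) = 1. Then for every λ = (λ₁,…,λₙ) ∈ Γ one has f(λ₁,…,λₙ) ≤ (1/n)·∑_{i=1}^{n} λᵢ. -/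
open Set

lemma concave_grad_ineq {E : Type*} [NormedAddCommGroup E] [NormedSpace ℝ E]
    {s : Set E} {f : E → ℝ} (hconc : ConcaveOn ℝ s f)
    {e x : E} (he : e ∈ s) (hx : x ∈ s) {D : E →L[ℝ] ℝ}
    (hD : HasFDerivAt f D e) : f x ≤ f e + D (x - e) := by
  set L : ℝ →ᵃ[ℝ] E := AffineMap.lineMap e x with hL
  have hmap : ∀ t : ℝ, t ∈ Icc (0:ℝ) 1 → L t ∈ s := fun t ht =>
    hconc.1.lineMap_mem he hx ht
  have hgconc : ConcaveOn ℝ (Icc (0:ℝ) 1) (f ∘ L) :=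
    (hconc.comp_affineMap L).subset hmap (convex_Icc 0 1)
  have hneg : ConvexOn ℝ (Icc (0:ℝ) 1) (fun t => -(f (L t))) := hgconc.neg
  have hLd : HasDerivAt (fun t : ℝ => L t) (x - e) 0 := by
    have : (fun t : ℝ => L t) = fun t : ℝ => t • (x - e) + e := by
      funext t; simp [hL, AffineMap.lineMap_apply]
    rw [this]
    have h := ((hasDerivAt_id (0:ℝ)).smul_const (x - e)).add_const e
    simpa using h
  have hL0 : L 0 = e := by simp [hL]
  have hgd : HasDerivAt (fun t => f (L t)) (D (x - e)) 0 := by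
    have hD' : HasFDerivAt f D (L 0) := hL0.symm ▸ hD
    exact hD'.comp_hasDerivAt 0 hLd
  have hgd' : HasDerivAt (fun t => -(f (L t))) (-(D (x - e))) 0 := hgd.neg
  have := hneg.le_slope_of_hasDerivAt (by simp : (0:ℝ) ∈ Icc (0:ℝ) 1)
      (by simp : (1:ℝ) ∈ Icc (0:ℝ) 1) one_pos hgd'
  rw [slope_def_field] at this
  have hL1 : L 1 = x := by simp [hL]
  simp [hL0, hL1] at this
  have hsub : D (x - e) = D x - D e := map_sub D x e
  linarith



/-- **Urbas' inequality (Lemma 2.6).** A concave, symmetric, positively 1-homogeneous,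
`C¹` elliptic operator `f` on an open convex invariant cone `Γ` with `Γₙ ⊆ Γ ⊆ Γ₁`,
normalized by `f(1,…,1) = 1`, satisfies `f(λ) ≤ (1/n) ∑ᵢ λᵢ` for every `λ ∈ Γ`. -/
theorem stmt_2 (n : ℕ) (hn : 2 ≤ n) (Γ : Set (Fin n → ℝ))
    (hΓopen : IsOpen Γ)
    (hΓconvex : Convex ℝ Γ)
    (hΓcone : ∀ t : ℝ, 0 < t → ∀ x ∈ Γ, t • x ∈ Γ)
    (hΓperm : ∀ σ : Equiv.Perm (Fin n), ∀ x ∈ Γ, (x ∘ σ) ∈ Γ)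
    (hΓn : {x : Fin n → ℝ | ∀ i, 0 < x i} ⊆ Γ)
    (hΓ1 : Γ ⊆ {x : Fin n → ℝ | 0 < ∑ i, x i})
    (f : (Fin n → ℝ) → ℝ) (f' : (Fin n → ℝ) → ((Fin n → ℝ) →L[ℝ] ℝ))
    (hf' : ∀ x ∈ Γ, HasFDerivAt f (f' x) x)
    (hf'cont : ContinuousOn f' Γ)
    (hconc : ConcaveOn ℝ Γ f)
    (hsym : ∀ σ : Equiv.Perm (Fin n), ∀ x ∈ Γ, f (x ∘ σ) = f x)
    (hhomog : ∀ t : ℝ, 0 < t → ∀ x ∈ Γ, f (t • x) = t * f x)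
    (hpos : ∀ x ∈ Γ, ∀ i, 0 < f' x (Pi.single i 1))
    (hnorm : f (fun _ => 1) = 1) :
    ∀ x ∈ Γ, f x ≤ (1 / n) * ∑ i, x i := by
  intro x hx
  set e : Fin n → ℝ := fun _ => 1 with he_def
  have he : e ∈ Γ := hΓn (fun i => one_pos)
  have hDe := hf' e he
  -- the derivative at e is symmetric
  have hsymD : ∀ σ : Equiv.Perm (Fin n), ∀ v : Fin n → ℝ, f' e (v ∘ σ) = f' e v := by
    intro σ v
    set P : (Fin n → ℝ) →L[ℝ] (Fin n → ℝ) :=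
      ContinuousLinearMap.pi (fun j => ContinuousLinearMap.proj (σ j)) with hP
    have hPapp : ∀ y : Fin n → ℝ, P y = y ∘ σ := fun y => rfl
    have hPe : P e = e := by funext j; rfl
    have hcomp : HasFDerivAt (f ∘ P) ((f' e).comp P) e := by
      have h1 : HasFDerivAt f (f' e) (P e) := hPe.symm ▸ hDe
      exact h1.comp e P.hasFDerivAt
    have heq : f =ᶠ[nhds e] (f ∘ P) := by
      filter_upwards [hΓopen.mem_nhds he] with y hy
      simpa [hPapp] using (hsym σ y hy).symm
    have h2 : HasFDerivAt f ((f' e).comp P) e := hcomp.congr_of_eventuallyEq heq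
    have h3 : (f' e).comp P = f' e := h2.unique hDe
    calc f' e (v ∘ σ) = ((f' e).comp P) v := rfl
      _ = f' e v := by rw [h3]
  -- all partial derivatives at e coincide
  set i0 : Fin n := ⟨0, by omega⟩ with hi0
  set c : ℝ := f' e (Pi.single i0 1) with hc
  have hsingle : ∀ i : Fin n, f' e (Pi.single i 1) = c := by
    intro i
    have hswap : (Pi.single i0 (1:ℝ)) ∘ (Equiv.swap i i0) = Pi.single i 1 := by
      funext k
      simp only [Function.comp_apply, Pi.single_apply, Equiv.swap_apply_def]
      split_ifs <;> simp_all
    rw [← hswap, hsymD]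
  -- Euler: f' e e = 1
  have hfe : f e = 1 := hnorm
  have heuler : f' e e = 1 := by
    have hDe1 : HasFDerivAt f (f' e) ((1:ℝ) • e) := by rwa [one_smul]
    have hsd : HasDerivAt (fun t : ℝ => t • e) e 1 := by
      simpa using (hasDerivAt_id (1:ℝ)).smul_const e
    have hφ : HasDerivAt (fun t : ℝ => f (t • e)) (f' e e) 1 := hDe1.comp_hasDerivAt 1 hsd
    have heq : (id : ℝ → ℝ) =ᶠ[nhds 1] (fun t : ℝ => f (t • e)) := by
      have hmem : Ioi (0:ℝ) ∈ nhds (1:ℝ) := isOpen_Ioi.mem_nhds (by norm_num)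
      filter_upwards [hmem] with t ht
      have hte : t • e ∈ Γ := hΓn (fun i => by simpa [he_def] using ht)
      have := hhomog t ht e he
      simp [this, hfe]
    have hid : HasDerivAt (id : ℝ → ℝ) (f' e e) 1 := hφ.congr_of_eventuallyEq heq
    have := hid.unique (hasDerivAt_id 1)
    linarith
  -- decomposition of the derivative
  have hdecomp : ∀ v : Fin n → ℝ, f' e v = c * ∑ i, v i := by
    intro v
    have hv : v = ∑ i, Pi.single i (v i) := (Finset.univ_sum_single v).symm
    calc f' e v = f' e (∑ i, Pi.single i (v i)) := by rw [← hv]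
      _ = ∑ i, f' e (Pi.single i (v i)) := map_sum _ _ _
      _ = ∑ i, v i * f' e (Pi.single i 1) := by
          refine Finset.sum_congr rfl fun i _ => ?_
          have : Pi.single i (v i) = v i • (Pi.single i 1 : Fin n → ℝ) := by
            rw [← Pi.single_smul]; simp
          rw [this, map_smul]; rfl
      _ = ∑ i, v i * c := by simp_rw [hsingle]
      _ = c * ∑ i, v i := by rw [Finset.mul_sum]; simp_rw [mul_comm]
  -- compute c
  have hce : f' e e = c * n := by
    rw [hdecomp e]; simp [he_def]
  have hn0 : (0:ℝ) < n := by
    have : 0 < n := by omega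
    exact_mod_cast this
  have hcval : c = 1 / n := by
    have : c * n = 1 := by rw [← hce, heuler]
    field_simp at this ⊢
    linarith
  -- gradient inequality
  have hgrad := concave_grad_ineq hconc he hx hDe
  rw [map_sub] at hgrad
  have hx' : f' e x = (1 / n) * ∑ i, x i := by rw [hdecomp x, hcval]
  rw [hx', hfe, heuler] at hgrad
  linarith
end

section
/- Fix integers n ≥ 2 and 1 ≤ p ≤ n. Let 𝒫ₚ = {λ ∈ ℝⁿ : λ_{i₁} + λ_{i₂} + ⋯ + λ_{iₚ} > 0 for all 1 ≤ i₁ < i₂ < ⋯ < iₚ ≤ n}, and define the p-Monge–Ampère polynomial 𝓜ₚ(λ) = ∏_{1 ≤ i₁ < i₂ < ⋯ < iₚ ≤ n} (λ_{i₁} + λ_{i₂} + ⋯ + λ_{iₚ}). Then the normalized operator f = 𝓜ₚ^{1/\binom{n}{p}} satisfies Condition (T) on 𝒫ₚ: there exists a constant 𝒯 > 0, depending only on n and p, such that ∏_{i=1}^{n} ∂f/∂λᵢ(λ) ≥ 𝒯 for all λ ∈ 𝒫ₚ. -/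
open Finset

/-- The `p`-Monge–Ampère polynomial `𝓜ₚ(λ) = ∏_{i₁<⋯<iₚ} (λ_{i₁} + ⋯ + λ_{iₚ})`. -/
noncomputable def pMongeAmpere (n p : ℕ) (x : Fin n → ℝ) : ℝ :=
  ∏ s ∈ Finset.powersetCard p (Finset.univ : Finset (Fin n)), ∑ i ∈ s, x i

/-- The cone `𝒫ₚ = {λ : λ_{i₁} + ⋯ + λ_{iₚ} > 0 for all i₁ < ⋯ < iₚ}`. -/
def pCone (n p : ℕ) : Set (Fin n → ℝ) :=
  {x | ∀ s ∈ Finset.powersetCard p (Finset.univ : Finset (Fin n)), 0 < ∑ i ∈ s, x i}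

/-- The number of `p`-subsets of `Fin n` containing a fixed element `i` is
`(n-1).choose (p-1)`. -/
lemma card_filter_mem_powersetCard (n p : ℕ) (hp1 : 1 ≤ p) (i : Fin n) :
    ((Finset.powersetCard p (Finset.univ : Finset (Fin n))).filter (fun s => i ∈ s)).card
      = (n - 1).choose (p - 1) := by
  classical
  have h : ((Finset.powersetCard p (Finset.univ : Finset (Fin n))).filter (fun s => i ∈ s)).card
      = (Finset.powersetCard (p - 1) ((Finset.univ : Finset (Fin n)).erase i)).card := by
    apply Finset.card_bij (fun s _ => s.erase i)
    · intro s hs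
      simp only [Finset.mem_filter, Finset.mem_powersetCard] at hs
      rw [Finset.mem_powersetCard]
      refine ⟨fun j hj => Finset.mem_erase.mpr ⟨(Finset.mem_erase.mp hj).1, Finset.mem_univ j⟩, ?_⟩
      rw [Finset.card_erase_of_mem hs.2, hs.1.2]
    · intro a ha b hb hab
      simp only [Finset.mem_filter] at ha hb
      rw [← Finset.insert_erase ha.2, ← Finset.insert_erase hb.2, hab]
    · intro t ht
      rw [Finset.mem_powersetCard] at ht
      have hit : i ∉ t := fun h => ((Finset.mem_erase.mp (ht.1 h)).1 rfl)
      refine ⟨insert i t, ?_, by simp [Finset.erase_insert hit]⟩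
      simp only [Finset.mem_filter, Finset.mem_powersetCard]
      refine ⟨⟨fun j _ => Finset.mem_univ j, ?_⟩, Finset.mem_insert_self i t⟩
      rw [Finset.card_insert_of_notMem hit, ht.2]
      omega
  rw [h, Finset.card_powersetCard, Finset.card_erase_of_mem (Finset.mem_univ i),
    Finset.card_univ, Fintype.card_fin]

/-- **Condition (T) for the normalized `p`-Monge–Ampère operator (Remark 1.2 (ii)).**
For `f = 𝓜ₚ^(1/(n choose p))` on the cone `𝒫ₚ` there is a uniform constant `𝒯 > 0`,
depending only on `n` and `p`, with `∏ᵢ ∂f/∂λᵢ(λ) ≥ 𝒯` for all `λ ∈ 𝒫ₚ`. -/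
theorem stmt_6 (n p : ℕ) (hn : 2 ≤ n) (hp1 : 1 ≤ p) (hpn : p ≤ n) :
    ∃ 𝒯 : ℝ, 0 < 𝒯 ∧
      ∀ x ∈ pCone n p,
        𝒯 ≤ ∏ i, fderiv ℝ
              (fun y : Fin n → ℝ => (pMongeAmpere n p y) ^ ((1 : ℝ) / (n.choose p))) x
              (Pi.single i 1) := by
  classical
  set N : ℕ := n.choose p with hNdef
  set k : ℕ := (n - 1).choose (p - 1) with hkdef
  have hNpos : 0 < N := Nat.choose_pos hpn
  have hkpos : 0 < k := Nat.choose_pos (by omega)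
  -- key binomial identity : n * k = p * N
  have hnk : n * k = p * N := by
    have := Nat.add_one_mul_choose_eq (n - 1) (p - 1)
    have h1 : (n - 1) + 1 = n := by omega
    have h2 : (p - 1) + 1 = p := by omega
    rw [h1, h2] at this
    rw [this, hNdef, Nat.mul_comm]
  set c : ℝ := (1 : ℝ) / N with hcdef
  have hcpos : 0 < c := by positivity
  refine ⟨((k : ℝ) / N) ^ n, by positivity, ?_⟩
  intro x hx
  set P := Finset.powersetCard p (Finset.univ : Finset (Fin n)) with hPdef
  have hσ : ∀ s ∈ P, 0 < ∑ i ∈ s, x i := hx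
  set M : ℝ := pMongeAmpere n p x with hMdef
  have hM : 0 < M := Finset.prod_pos hσ
  -- key real exponent identity
  have hexp : c * n = (k : ℝ)⁻¹ * p := by
    have hk' : (k : ℝ) ≠ 0 := Nat.cast_ne_zero.mpr hkpos.ne'
    have hN' : (N : ℝ) ≠ 0 := Nat.cast_ne_zero.mpr hNpos.ne'
    have : (n : ℝ) * k = p * N := by exact_mod_cast hnk
    rw [hcdef]
    field_simp
    linarith [this]
  -- the derivative of M
  set D : (Fin n → ℝ) →L[ℝ] ℝ :=
    ∑ s ∈ P, (∏ t ∈ P.erase s, ∑ i ∈ t, x i) •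
      (∑ i ∈ s, ContinuousLinearMap.proj (R := ℝ) (φ := fun _ : Fin n => ℝ) i) with hDdef
  have hMd : HasFDerivAt (pMongeAmpere n p) D x := by
    apply HasFDerivAt.finset_prod
    intro s _
    exact HasFDerivAt.fun_sum fun i _ =>
      (ContinuousLinearMap.proj (R := ℝ) (φ := fun _ : Fin n => ℝ) i).hasFDerivAt
  have hfd : HasFDerivAt (fun y : Fin n → ℝ => (pMongeAmpere n p y) ^ c)
      ((c * M ^ (c - 1)) • D) x := hMd.rpow_const (Or.inl hM.ne')
  have hfderiv : fderiv ℝ (fun y : Fin n → ℝ => (pMongeAmpere n p y) ^ ((1 : ℝ) / (n.choose p))) x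
      = (c * M ^ (c - 1)) • D := hfd.fderiv
  -- value of D at a basis vector
  have hDval : ∀ i : Fin n, D (Pi.single i 1)
      = ∑ s ∈ P.filter (fun s => i ∈ s), ∏ t ∈ P.erase s, ∑ j ∈ t, x j := by
    intro i
    rw [hDdef]
    simp only [ContinuousLinearMap.sum_apply, ContinuousLinearMap.smul_apply,
      ContinuousLinearMap.proj_apply, smul_eq_mul]
    rw [Finset.sum_filter]
    congr 1
    ext s
    have : ∑ j ∈ s, Pi.single i (1 : ℝ) j = if i ∈ s then 1 else 0 := by
      simp [Pi.single_apply, Finset.sum_ite_eq' s i (fun _ => (1 : ℝ))]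
    rw [this]
    by_cases h : i ∈ s <;> simp [h]
  -- value of the fderiv at a basis vector
  set S : Fin n → ℝ := fun i => ∑ s ∈ P.filter (fun s => i ∈ s), (∑ j ∈ s, x j)⁻¹ with hSdef
  have hval : ∀ i : Fin n,
      fderiv ℝ (fun y : Fin n → ℝ => (pMongeAmpere n p y) ^ ((1 : ℝ) / (n.choose p))) x
        (Pi.single i 1) = c * M ^ c * S i := by
    intro i
    rw [hfderiv]
    simp only [ContinuousLinearMap.smul_apply, smul_eq_mul]
    rw [hDval i]
    have h1 : ∀ s ∈ P.filter (fun s => i ∈ s),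
        ∏ t ∈ P.erase s, ∑ j ∈ t, x j = (∑ j ∈ s, x j)⁻¹ * M := by
      intro s hs
      have hsP : s ∈ P := (Finset.mem_filter.mp hs).1
      have := Finset.mul_prod_erase P (fun t => ∑ j ∈ t, x j) hsP
      have hσs : (0 : ℝ) < ∑ j ∈ s, x j := hσ s hsP
      field_simp [hMdef, pMongeAmpere, ← hPdef]
      rw [hMdef, pMongeAmpere, ← hPdef]
      linarith [this]
    rw [Finset.sum_congr rfl h1, ← Finset.sum_mul]
    have hMc : M ^ (c - 1) * M = M ^ c := by
      rw [Real.rpow_sub_one hM.ne', div_mul_cancel₀ _ hM.ne']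
    have : c * M ^ (c - 1) * ((∑ s ∈ P.filter (fun s => i ∈ s), (∑ j ∈ s, x j)⁻¹) * M)
        = c * (M ^ (c - 1) * M) * S i := by rw [hSdef]; ring
    rw [this, hMc]
  -- AM-GM lower bound for each S i
  set G : Fin n → ℝ := fun i =>
    ∏ s ∈ P.filter (fun s => i ∈ s), ((∑ j ∈ s, x j)⁻¹) ^ ((k : ℝ)⁻¹) with hGdef
  have hGpos : ∀ i, 0 < G i := by
    intro i
    apply Finset.prod_pos
    intro s hs
    have := hσ s (Finset.mem_filter.mp hs).1
    positivity
  have hcard : ∀ i : Fin n, (P.filter (fun s => i ∈ s)).card = k :=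
    fun i => card_filter_mem_powersetCard n p hp1 i
  have hAMGM : ∀ i : Fin n, (k : ℝ) * G i ≤ S i := by
    intro i
    have := Real.geom_mean_le_arith_mean_weighted (P.filter (fun s => i ∈ s))
      (fun _ => (k : ℝ)⁻¹) (fun s => (∑ j ∈ s, x j)⁻¹)
      (fun _ _ => by positivity)
      (by simp [hcard i, Finset.sum_const, mul_inv_cancel₀ (Nat.cast_ne_zero.mpr hkpos.ne' : (k:ℝ) ≠ 0)])
      (fun s hs => by have := hσ s (Finset.mem_filter.mp hs).1; positivity)
    have hle : ∏ s ∈ P.filter (fun s => i ∈ s), ((∑ j ∈ s, x j)⁻¹) ^ ((k : ℝ)⁻¹)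
        ≤ ∑ s ∈ P.filter (fun s => i ∈ s), (k : ℝ)⁻¹ * (∑ j ∈ s, x j)⁻¹ := this
    rw [hGdef, hSdef]
    calc (k : ℝ) * ∏ s ∈ P.filter (fun s => i ∈ s), ((∑ j ∈ s, x j)⁻¹) ^ ((k : ℝ)⁻¹)
        ≤ (k : ℝ) * ∑ s ∈ P.filter (fun s => i ∈ s), (k : ℝ)⁻¹ * (∑ j ∈ s, x j)⁻¹ :=
          mul_le_mul_of_nonneg_left hle (by positivity)
      _ = ∑ s ∈ P.filter (fun s => i ∈ s), (∑ j ∈ s, x j)⁻¹ := by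
          rw [← Finset.mul_sum, ← mul_assoc,
            mul_inv_cancel₀ (Nat.cast_ne_zero.mpr hkpos.ne' : (k:ℝ) ≠ 0), one_mul]
  -- the key identity: (M^c)^n * ∏ G i = 1
  have hswap : ∏ i : Fin n, G i
      = ∏ s ∈ P, (((∑ j ∈ s, x j)⁻¹) ^ ((k : ℝ)⁻¹)) ^ p := by
    rw [hGdef]
    rw [Finset.prod_comm' (s := (Finset.univ : Finset (Fin n)))
      (t := fun i => P.filter (fun s => i ∈ s)) (t' := P)
      (s' := fun s => Finset.univ.filter (fun i => i ∈ s))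
      (by intro i s; simp only [Finset.mem_univ, Finset.mem_filter, true_and]; tauto)]
    apply Finset.prod_congr rfl
    intro s hs
    rw [Finset.prod_const]
    congr 1
    · rw [Finset.filter_univ_mem]
      exact (Finset.mem_powersetCard.mp hs).2
  have hkey : (M ^ c) ^ (n : ℕ) * ∏ i : Fin n, G i = 1 := by
    rw [hswap]
    have h1 : (M ^ c) ^ (n : ℕ) = ∏ s ∈ P, (∑ j ∈ s, x j) ^ (c * n) := by
      rw [← Real.rpow_natCast (M ^ c) n, ← Real.rpow_mul hM.le, hMdef, pMongeAmpere, ← hPdef,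
        ← Real.finset_prod_rpow P _ (fun s hs => (hσ s hs).le)]
    have h2 : ∀ s ∈ P, (((∑ j ∈ s, x j)⁻¹) ^ ((k : ℝ)⁻¹)) ^ p
        = (∑ j ∈ s, x j) ^ (-(c * n)) := by
      intro s hs
      have hσs := hσ s hs
      rw [← Real.rpow_natCast (((∑ j ∈ s, x j)⁻¹) ^ ((k : ℝ)⁻¹)) p,
        ← Real.rpow_mul (by positivity), Real.inv_rpow hσs.le,
        ← Real.rpow_neg hσs.le, ← hexp]
    rw [h1, Finset.prod_congr rfl h2, ← Finset.prod_mul_distrib]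
    apply Finset.prod_eq_one
    intro s hs
    rw [← Real.rpow_add (hσ s hs)]
    simp
  -- put everything together
  rw [Finset.prod_congr rfl (fun i _ => hval i)]
  have hSpos : ∀ i, 0 < S i := fun i =>
    lt_of_lt_of_le (by have := hGpos i; positivity) (hAMGM i)
  calc ((k : ℝ) / N) ^ n
      = c ^ n * (M ^ c) ^ n * ((k : ℝ) ^ n * ∏ i : Fin n, G i) := by
        rw [show c ^ n * (M ^ c) ^ n * ((k : ℝ) ^ n * ∏ i : Fin n, G i)
            = (c * k) ^ n * ((M ^ c) ^ n * ∏ i : Fin n, G i) from by ring,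
          hkey, mul_one, hcdef, one_div_mul_eq_div]
    _ = c ^ n * (M ^ c) ^ n * ∏ i : Fin n, ((k : ℝ) * G i) := by
        rw [Finset.prod_mul_distrib, Finset.prod_const, Finset.card_univ, Fintype.card_fin]
    _ ≤ c ^ n * (M ^ c) ^ n * ∏ i : Fin n, S i := by
        apply mul_le_mul_of_nonneg_left _ (by positivity)
        apply Finset.prod_le_prod
        · intro i _; have := hGpos i; positivity
        · intro i _; exact hAMGM i
    _ = ∏ i : Fin n, (c * M ^ c * S i) := by
        rw [Finset.prod_mul_distrib, Finset.prod_mul_distrib, Finset.prod_const,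
          Finset.prod_const, Finset.card_univ, Fintype.card_fin]
end
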